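/- Let C be a Hom-finite, Krull–Schmidt, k-linear triangulated category, (X,Y) a torsion pair in C with core I, and D a subcategory satisfying condition (RF) with D ⊆ X ⊆ (D[-1])⊥. Let (X',Y') = (μ⁻¹(X;D), μ⁻¹(Y;D[1])) with core I'. If D is a proper subcategory of I (i.e. some object of I does not belong to D), then I' ≠ I and (X',Y') ≠ (X,Y). -/

import Mathlib

open CategoryTheory CategoryTheory.Limits CategoryTheory.Pretriangulated

variable {C : Type*} [Category C] [Preadditive C] [HasZeroObject C]
  [HasShift C ℤ] [∀ n : ℤ, (shiftFunctor C n).Additive] [Pretriangulated C]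

/-- `Hom(𝒳, 𝒴) = 0`. -/
def homZero (𝒳 𝒴 : Set C) : Prop :=
  ∀ ⦃A B : C⦄, A ∈ 𝒳 → B ∈ 𝒴 → ∀ f : A ⟶ B, f = 0

/-- The shift `𝒳[n]` of a subcategory (closed under isomorphisms). -/
def shiftSet (𝒳 : Set C) (n : ℤ) : Set C :=
  {Z | ∃ A ∈ 𝒳, Nonempty ((A⟦n⟧) ≅ Z)}

/-- The class `𝒳 * 𝒴` of extensions. -/
def extClass (𝒳 𝒴 : Set C) : Set C :=
  {Z | ∃ (A B : C) (f : A ⟶ Z) (g : Z ⟶ B) (h : B ⟶ A⟦(1:ℤ)⟧),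
      A ∈ 𝒳 ∧ B ∈ 𝒴 ∧ Triangle.mk f g h ∈ distTriang C}

/-- A torsion pair: `Hom(𝒳,𝒴) = 0` and `C = 𝒳 * 𝒴`. -/
def IsTorsionPair (𝒳 𝒴 : Set C) : Prop :=
  homZero 𝒳 𝒴 ∧ ∀ Z : C, Z ∈ extClass 𝒳 𝒴

/-- A cotorsion pair: `Hom(𝒳,𝒲[1]) = 0` and `C = 𝒳 * 𝒲[1]`. -/
def IsCotorsionPair (𝒳 𝒲 : Set C) : Prop :=
  IsTorsionPair 𝒳 (shiftSet 𝒲 (1:ℤ))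

/-- Full subcategory closed under isomorphisms, finite direct sums and direct summands. -/
structure IsSubcat (𝒳 : Set C) : Prop where
  mem_of_iso : ∀ ⦃A B : C⦄, (A ≅ B) → A ∈ 𝒳 → B ∈ 𝒳
  biprod_mem : ∀ ⦃A B : C⦄, A ∈ 𝒳 → B ∈ 𝒳 → (A ⊞ B) ∈ 𝒳
  mem_of_biprod : ∀ ⦃A B : C⦄, (A ⊞ B) ∈ 𝒳 → A ∈ 𝒳 ∧ B ∈ 𝒳

/-- `⊥(𝒟[1]) = {M : Hom(M, 𝒟[1]) = 0}`. -/
def leftPerpShift (𝒟 : Set C) : Set C :=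
  {M : C | ∀ D ∈ 𝒟, ∀ f : M ⟶ (D⟦(1:ℤ)⟧), f = 0}

/-- `(𝒟[-1])⊥ = {M : Hom(𝒟[-1], M) = 0}`. -/
def shiftRightPerp (𝒟 : Set C) : Set C :=
  {M : C | ∀ D ∈ 𝒟, ∀ f : (D⟦(-1:ℤ)⟧) ⟶ M, f = 0}

/-- `A` admits a left `𝒟`-approximation. -/
def HasLeftApprox (𝒟 : Set C) (A : C) : Prop :=
  ∃ D ∈ 𝒟, ∃ f : A ⟶ D, ∀ D' ∈ 𝒟, ∀ g : A ⟶ D', ∃ h : D ⟶ D', f ≫ h = g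

/-- `A` admits a right `𝒟`-approximation. -/
def HasRightApprox (𝒟 : Set C) (A : C) : Prop :=
  ∃ D ∈ 𝒟, ∃ f : D ⟶ A, ∀ D' ∈ 𝒟, ∀ g : D' ⟶ A, ∃ h : D' ⟶ D, h ≫ f = g

/-- `μ⁻¹(ℳ;𝒟) = (𝒟 * ℳ[1]) ∩ ⊥(𝒟[1])`. -/
def muInv (ℳ 𝒟 : Set C) : Set C :=
  extClass 𝒟 (shiftSet ℳ (1:ℤ)) ∩ leftPerpShift 𝒟

/-- `μ(𝒩;𝒟) = (𝒩[-1] * 𝒟) ∩ (𝒟[-1])⊥`. -/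
def mu (𝒩 𝒟 : Set C) : Set C :=
  extClass (shiftSet 𝒩 (-1:ℤ)) 𝒟 ∩ shiftRightPerp 𝒟

/-- `(ℳ,𝒩)` is a `𝒟`-mutation pair. -/
def IsMutationPair (ℳ 𝒩 𝒟 : Set C) : Prop :=
  ℳ = mu 𝒩 𝒟 ∧ 𝒩 = muInv ℳ 𝒟

/-- Condition (RF): `𝒟` is functorially finite, rigid and `⊥(𝒟[1]) = (𝒟[-1])⊥`. -/
def RF (𝒟 : Set C) : Prop :=
  (∀ A : C, HasLeftApprox 𝒟 A) ∧ (∀ A : C, HasRightApprox 𝒟 A) ∧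
    homZero 𝒟 (shiftSet 𝒟 (1:ℤ)) ∧ leftPerpShift 𝒟 = shiftRightPerp 𝒟

/-- The Ext-injective objects of `𝒳`. -/
def extInj (𝒳 : Set C) : Set C :=
  {T : C | T ∈ 𝒳 ∧ ∀ A ∈ 𝒳, ∀ f : A ⟶ (T⟦(1:ℤ)⟧), f = 0}

/-- The Ext-projective objects of `𝒴`. -/
def extProj (𝒴 : Set C) : Set C :=
  {T : C | T ∈ 𝒴 ∧ ∀ B ∈ 𝒴, ∀ f : T ⟶ (B⟦(1:ℤ)⟧), f = 0}


open CategoryTheory CategoryTheory.Limits CategoryTheory.Pretriangulated in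
lemma key_summand {C : Type*} [Category C] [Preadditive C] [HasZeroObject C]
    [HasShift C ℤ] [∀ n : ℤ, (shiftFunctor C n).Additive] [Pretriangulated C]
    {𝒳 𝒴 𝒟 : Set C} (hom0 : homZero 𝒳 𝒴) (hD : IsSubcat 𝒟) {Z : C} (hZX : Z ∈ 𝒳)
    (h : Z ∈ shiftSet (muInv 𝒴 (shiftSet 𝒟 (1:ℤ))) (-1:ℤ)) : Z ∈ 𝒟 := by
  obtain ⟨A, hA, ⟨eZ⟩⟩ := h
  obtain ⟨⟨P, Q, f, g, h3, hP, hQ, hdist⟩, -⟩ := hA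
  obtain ⟨D, hDmem, ⟨eD⟩⟩ := hP
  obtain ⟨Y, hYmem, ⟨eQ⟩⟩ := hQ
  set F := shiftFunctor C (-1:ℤ) with hF
  -- iso Q⟦-1⟧ ≅ Y
  let w : F.obj Q ≅ Y :=
    (F.mapIso eQ).symm ≪≫ ((shiftEquiv C (1:ℤ)).unitIso.app Y).symm
  -- g = 0
  have hm : (eZ.inv ≫ F.map g ≫ w.hom) = 0 := hom0 hZX hYmem _
  have h1 : F.map g ≫ w.hom = 0 := by
    rw [← cancel_epi eZ.inv]; simpa using hm
  have h2 : F.map g = 0 := by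
    rw [← cancel_mono w.hom]; simpa using h1
  have hg : g = 0 := F.map_injective (by rw [h2, Functor.map_zero])
  -- split the (inverse rotated) triangle
  have hdist' := inv_rot_of_distTriang _ hdist
  obtain ⟨e, -, -⟩ := exists_iso_binaryBiproduct_of_distTriang _ hdist'
    (by dsimp [Triangle.invRotate]; rw [hg]; exact Limits.zero_comp)
  -- e : P ≅ Q⟦-1⟧ ⊞ A
  dsimp [Triangle.invRotate] at e
  -- build iso D ≅ Q⟦-1⟧⟦-1⟧ ⊞ Z
  haveI : PreservesBinaryBiproducts F :=
    preservesBinaryBiproducts_of_preservesBinaryProducts F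
  have total : D ≅ (F.obj (Q⟦(-1:ℤ)⟧)) ⊞ Z :=
    (shiftEquiv C (1:ℤ)).unitIso.app D ≪≫ F.mapIso (eD ≪≫ e) ≪≫
      F.mapBiprod _ _ ≪≫ biprod.mapIso (Iso.refl _) eZ
  exact (hD.mem_of_biprod (hD.mem_of_iso total hDmem)).2

/-- if `𝒟` is a proper subcategory of the core `I` of the torsion pair
`(𝒳,𝒴)`, then the mutated core `I'` differs from `I` and `(𝒳',𝒴') ≠ (𝒳,𝒴)`. -/
theorem stmt15 (k : Type*) [Field k] [Linear k C]
    [∀ A B : C, Module.Finite k (A ⟶ B)] [IsIdempotentComplete C]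
    (𝒳 𝒴 𝒟 : Set C) (hX : IsSubcat 𝒳) (hY : IsSubcat 𝒴) (hD : IsSubcat 𝒟)
    (hpair : IsTorsionPair 𝒳 𝒴)
    (hRF : RF 𝒟)
    (hDX : 𝒟 ⊆ 𝒳) (hXD : 𝒳 ⊆ shiftRightPerp 𝒟)
    (hDI : 𝒟 ⊆ 𝒳 ∩ shiftSet 𝒴 (-1:ℤ))
    (hproper : ∃ Z ∈ 𝒳 ∩ shiftSet 𝒴 (-1:ℤ), Z ∉ 𝒟) :
    muInv 𝒳 𝒟 ∩ shiftSet (muInv 𝒴 (shiftSet 𝒟 (1:ℤ))) (-1:ℤ) ≠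
      𝒳 ∩ shiftSet 𝒴 (-1:ℤ) ∧
    ¬(muInv 𝒳 𝒟 = 𝒳 ∧ muInv 𝒴 (shiftSet 𝒟 (1:ℤ)) = 𝒴) := by
  obtain ⟨Z, hZI, hZD⟩ := hproper
  have hne : muInv 𝒳 𝒟 ∩ shiftSet (muInv 𝒴 (shiftSet 𝒟 (1:ℤ))) (-1:ℤ) ≠
      𝒳 ∩ shiftSet 𝒴 (-1:ℤ) := by
    intro heq
    have hZ' : Z ∈ muInv 𝒳 𝒟 ∩ shiftSet (muInv 𝒴 (shiftSet 𝒟 (1:ℤ))) (-1:ℤ) :=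
      heq ▸ hZI
    exact hZD (key_summand hpair.1 hD hZI.1 hZ'.2)
  exact ⟨hne, fun ⟨h1, h2⟩ => hne (by rw [h1, h2])⟩
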